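/- The Seduction rule never creates a cycle of pointer values: if in a configuration the p-values contain no directed cycle (i.e., the relation i → p_i restricted to non-null pointers is acyclic), and a step consists only of Seduction moves, then the resulting configuration's p-values also contain no directed cycle. -/

import Mathlib

structure Config (V : Type*) where
  p : V → Option V
  m : V → Bool

variable {V : Type*}

def PRmarried (G : SimpleGraph V) (p : V → Option V) (i : V) : Prop :=
  ∃ j, G.Adj i j ∧ p i = some j ∧ p j = some i

def PRwaiting (G : SimpleGraph V) (p : V → Option V) (i : V) : Prop :=
  ∃ j, G.Adj i j ∧ p i = some j ∧ p j ≠ some i ∧ ¬ PRmarried G p j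

def PRcondemned (G : SimpleGraph V) (p : V → Option V) (i : V) : Prop :=
  ∃ j, G.Adj i j ∧ p i = some j ∧ p j ≠ some i ∧ PRmarried G p j

def PRdead (G : SimpleGraph V) (p : V → Option V) (i : V) : Prop :=
  p i = none ∧ ∀ j, G.Adj i j → PRmarried G p j

def PRfree (G : SimpleGraph V) (p : V → Option V) (i : V) : Prop :=
  p i = none ∧ ∃ j, G.Adj i j ∧ ¬ PRmarried G p j

def Valid (G : SimpleGraph V) (C : Config V) : Prop :=
  ∀ i j, C.p i = some j → G.Adj i j

section Rules
variable [LinearOrder V]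

def UpdateEnabled (G : SimpleGraph V) (C : Config V) (i : V) : Prop :=
  ¬ (C.m i = true ↔ PRmarried G C.p i)

def MarriageEnabled (G : SimpleGraph V) (C : Config V) (i : V) : Prop :=
  (C.m i = true ↔ PRmarried G C.p i) ∧ C.p i = none ∧ ∃ j, G.Adj i j ∧ C.p j = some i

def SeductionEnabled (G : SimpleGraph V) (C : Config V) (i : V) : Prop :=
  (C.m i = true ↔ PRmarried G C.p i) ∧ C.p i = none ∧
    (∀ k, G.Adj i k → C.p k ≠ some i) ∧
    ∃ j, G.Adj i j ∧ C.p j = none ∧ i < j ∧ C.m j = false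

def AbandonmentEnabled (G : SimpleGraph V) (C : Config V) (i : V) : Prop :=
  (C.m i = true ↔ PRmarried G C.p i) ∧
    ∃ j, G.Adj i j ∧ C.p i = some j ∧ C.p j ≠ some i ∧ (C.m j = true ∨ j ≤ i)

def Eligible (G : SimpleGraph V) (C : Config V) (i : V) : Prop :=
  UpdateEnabled G C i ∨ MarriageEnabled G C i ∨ SeductionEnabled G C i ∨ AbandonmentEnabled G C i

def Stable (G : SimpleGraph V) (C : Config V) : Prop := ∀ i, ¬ Eligible G C i

def Unchanged (C C' : Config V) (i : V) : Prop := C'.p i = C.p i ∧ C'.m i = C.m i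

def DoesUpdate (G : SimpleGraph V) (C C' : Config V) (i : V) : Prop :=
  UpdateEnabled G C i ∧ C'.p i = C.p i ∧ (C'.m i = true ↔ PRmarried G C.p i)

def DoesMarriageTo (G : SimpleGraph V) (C C' : Config V) (i j : V) : Prop :=
  MarriageEnabled G C i ∧ G.Adj i j ∧ C.p j = some i ∧ C'.p i = some j ∧ C'.m i = C.m i

def DoesSeductionTo (G : SimpleGraph V) (C C' : Config V) (i j : V) : Prop :=
  SeductionEnabled G C i ∧ G.Adj i j ∧ C.p j = none ∧ i < j ∧ C.m j = false ∧
    (∀ k, G.Adj i k → C.p k = none → i < k → C.m k = false → k ≤ j) ∧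
    C'.p i = some j ∧ C'.m i = C.m i

def DoesAbandonmentFrom (G : SimpleGraph V) (C C' : Config V) (i j : V) : Prop :=
  AbandonmentEnabled G C i ∧ C.p i = some j ∧ C'.p i = none ∧ C'.m i = C.m i

def Moves (G : SimpleGraph V) (C C' : Config V) (i : V) : Prop :=
  DoesUpdate G C C' i ∨ (∃ j, DoesMarriageTo G C C' i j) ∨
    (∃ j, DoesSeductionTo G C C' i j) ∨ (∃ j, DoesAbandonmentFrom G C C' i j)

def Step (G : SimpleGraph V) (C C' : Config V) : Prop :=
  (∃ i, Moves G C C' i) ∧ ∀ i, Moves G C C' i ∨ Unchanged C C' i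

def MSAMoveTo (G : SimpleGraph V) (C C' : Config V) (i j : V) : Prop :=
  DoesMarriageTo G C C' i j ∨ DoesSeductionTo G C C' i j ∨ DoesAbandonmentFrom G C C' i j

def IJMove (G : SimpleGraph V) (C C' : Config V) (i j : V) : Prop :=
  MSAMoveTo G C C' i j ∨ MSAMoveTo G C C' j i

end Rules

def HasPointerCycle (p : V → Option V) : Prop :=
  ∃ (k : ℕ) (f : ℕ → V), 0 < k ∧ (∀ x, x < k → p (f x) = some (f (x+1))) ∧ f k = f 0

theorem seduction_preserves_acyclicity [Fintype V] [LinearOrder V] (G : SimpleGraph V)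
    (C C' : Config V) (hvalid : Valid G C)
    (hmove : ∃ i j, DoesSeductionTo G C C' i j)
    (honly : ∀ i, (∃ j, DoesSeductionTo G C C' i j) ∨ Unchanged C C' i)
    (hacyc : ¬ HasPointerCycle C.p) : ¬ HasPointerCycle C'.p := by
  rintro ⟨k, f, hk, hcyc, hwrap⟩
  by_cases hsed : ∃ t, t < k ∧ ∃ j, DoesSeductionTo G C C' (f t) j
  · -- take the seducing index with maximal node value
    obtain ⟨t0, ht0k, ht0⟩ := hsed
    classical
    set s : Finset ℕ := (Finset.range k).filter
      (fun t => ∃ j, DoesSeductionTo G C C' (f t) j) with hs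
    have hmem : t0 ∈ s := by
      simp only [hs, Finset.mem_filter, Finset.mem_range]
      exact ⟨ht0k, ht0⟩
    obtain ⟨t, hts, hmax⟩ := s.exists_max_image f ⟨t0, hmem⟩
    simp only [hs, Finset.mem_filter, Finset.mem_range] at hts
    obtain ⟨htk, j, hD⟩ := hts
    -- j = f (t+1)
    have hj : j = f (t + 1) := by
      have h1 := hD.2.2.2.2.2.2.1
      have h2 := hcyc t htk
      rw [h1] at h2
      exact Option.some_injective _ h2
    -- C.p (f (t+1)) = none, and f t < f (t+1)
    have hnone : C.p (f (t + 1)) = none := hj ▸ hD.2.2.1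
    have hlt : f t < f (t + 1) := hj ▸ hD.2.2.2.1
    set u : ℕ := if t + 1 = k then 0 else t + 1 with hu
    have hfu : f u = f (t + 1) := by
      rcases eq_or_ne (t + 1) k with h | h
      · simp [hu, h, ← hwrap]
      · simp [hu, h]
    have huk : u < k := by
      rcases eq_or_ne (t + 1) k with h | h
      · simpa [hu, h] using hk
      · simp only [hu, if_neg h]
        omega
    rcases honly (f u) with ⟨j', hD'⟩ | hunch
    · -- f u also seduces: contradicts maximality since f t < f u
      have : f u ≤ f t := hmax u (by simp [hs, Finset.mem_filter, Finset.mem_range, huk]; exact ⟨j', hD'⟩)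
      rw [hfu] at this
      exact absurd hlt (not_lt.mpr this)
    · -- f u unchanged: but C.p (f u) = none yet C'.p (f u) = some _
      have := hcyc u huk
      rw [hunch.1, hfu, hnone] at this
      exact absurd this (by simp)
  · -- no node in the cycle seduces: old cycle
    push_neg at hsed
    exact hacyc ⟨k, f, hk, fun x hx => by
      rcases honly (f x) with h | hunch
      · exact absurd h (not_exists.mpr (hsed x hx))
      · rw [← hunch.1]; exact hcyc x hx, hwrap⟩
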